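/- For every natural number d ≥ 1 there exist s, s' ∈ N and e ∈ N ∪ {0} with s' ∈ {s, s+1}, s·s' + e = d, and e < s', such that the 'daisy' configuration D_d = R(s,s') ∪ L_e is a minimizer of the edge perimeter among d-element subsets of Z^2, where R(s,s') = Z^2 ∩ ([1,s]×[1,s']) and L_e is a line of e points attached along one side of the rectangle. -/

import Mathlib

open Finset Filter

/-- Adjacency in `ℤ²`: Euclidean distance one. -/
def adj2 (x y : ℤ × ℤ) : Prop :=
  (x.1 - y.1) ^ 2 + (x.2 - y.2) ^ 2 = 1

/-- Cardinality of the edge boundary `Θ₂(E)` in `ℤ²` (ordered pairs). -/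
noncomputable def theta2 (E : Finset (ℤ × ℤ)) : ℕ :=
  Set.ncard {p : (ℤ × ℤ) × (ℤ × ℤ) | adj2 p.1 p.2 ∧ p.1 ∈ E ∧ p.2 ∉ E}

/-- Number of ordered bonded pairs of `E ⊂ ℤ²`; this equals `2 b(E)`. -/
noncomputable def bondPairs2 (E : Finset (ℤ × ℤ)) : ℕ :=
  Set.ncard {p : (ℤ × ℤ) × (ℤ × ℤ) | adj2 p.1 p.2 ∧ p.1 ∈ E ∧ p.2 ∈ E}

/-- Number of unit bonds `b(E) = ½·#{(x,y) ∈ E×E : |x−y|=1}`. -/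
noncomputable def bonds2 (E : Finset (ℤ × ℤ)) : ℕ := bondPairs2 E / 2

lemma sq_abc (a b : ℤ) (h : a^2 + b^2 = 1) :
    (a = 1 ∧ b = 0) ∨ (a = -1 ∧ b = 0) ∨ (a = 0 ∧ b = 1) ∨ (a = 0 ∧ b = -1) := by
  have h1 : -1 ≤ a := by nlinarith [sq_nonneg b, sq_nonneg (a+1)]
  have h2 : a ≤ 1 := by nlinarith [sq_nonneg b, sq_nonneg (a-1)]
  have h3 : -1 ≤ b := by nlinarith [sq_nonneg a, sq_nonneg (b+1)]
  have h4 : b ≤ 1 := by nlinarith [sq_nonneg a, sq_nonneg (b-1)]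
  interval_cases a <;> interval_cases b <;> omega

lemma adj2_iff (x y : ℤ × ℤ) : adj2 x y ↔
    y = (x.1+1, x.2) ∨ y = (x.1-1, x.2) ∨ y = (x.1, x.2+1) ∨ y = (x.1, x.2-1) := by
  constructor
  · intro h
    rcases sq_abc _ _ h with ⟨h1,h2⟩|⟨h1,h2⟩|⟨h1,h2⟩|⟨h1,h2⟩
    · right; left; rw [Prod.ext_iff]; constructor <;> simp <;> omega
    · left; rw [Prod.ext_iff]; constructor <;> simp <;> omega
    · right; right; right; rw [Prod.ext_iff]; constructor <;> simp <;> omega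
    · right; right; left; rw [Prod.ext_iff]; constructor <;> simp <;> omega
  · rintro (h|h|h|h) <;> subst h <;> simp [adj2] <;> ring

def Hcnt (F : Finset (ℤ × ℤ)) : ℕ := (F.filter (fun x => ((x.1+1, x.2) : ℤ×ℤ) ∈ F)).card
def Vcnt (F : Finset (ℤ × ℤ)) : ℕ := (F.filter (fun x => ((x.1, x.2+1) : ℤ×ℤ) ∈ F)).card

def pairsOf (F : Finset (ℤ × ℤ)) (f : ℤ×ℤ → ℤ×ℤ) : Finset ((ℤ×ℤ)×(ℤ×ℤ)) :=
  (F.filter (fun x => f x ∈ F)).image (fun x => (x, f x))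

lemma mem_pairsOf {F : Finset (ℤ × ℤ)} {f : ℤ×ℤ → ℤ×ℤ} {p : (ℤ×ℤ)×(ℤ×ℤ)} :
    p ∈ pairsOf F f ↔ p.1 ∈ F ∧ p.2 ∈ F ∧ p.2 = f p.1 := by
  simp only [pairsOf, mem_image, mem_filter]
  constructor
  · rintro ⟨x, ⟨hx, hfx⟩, rfl⟩; exact ⟨hx, hfx, rfl⟩
  · rintro ⟨h1, h2, h3⟩; exact ⟨p.1, ⟨h1, h3 ▸ h2⟩, by rw [← h3]⟩

lemma card_pairsOf (F : Finset (ℤ × ℤ)) (f : ℤ×ℤ → ℤ×ℤ) :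
    (pairsOf F f).card = (F.filter (fun x => f x ∈ F)).card :=
  Finset.card_image_of_injective _ (fun a b h => (Prod.mk.injEq _ _ _ _ ▸ h).1)

lemma card_filter_H (F : Finset (ℤ × ℤ)) :
    (F.filter (fun x => ((x.1-1, x.2) : ℤ×ℤ) ∈ F)).card
      = (F.filter (fun x => ((x.1+1, x.2) : ℤ×ℤ) ∈ F)).card := by
  apply Finset.card_bij' (fun a _ => ((a.1 - 1, a.2) : ℤ×ℤ)) (fun a _ => ((a.1 + 1, a.2) : ℤ×ℤ))
  · intro a ha; simp only [mem_filter] at *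
    refine ⟨ha.2, ?_⟩; simpa using ha.1
  · intro a ha; simp only [mem_filter] at *
    refine ⟨ha.2, ?_⟩; simpa using ha.1
  · intro a _; simp
  · intro a _; simp

lemma card_filter_V (F : Finset (ℤ × ℤ)) :
    (F.filter (fun x => ((x.1, x.2-1) : ℤ×ℤ) ∈ F)).card
      = (F.filter (fun x => ((x.1, x.2+1) : ℤ×ℤ) ∈ F)).card := by
  apply Finset.card_bij' (fun a _ => ((a.1, a.2 - 1) : ℤ×ℤ)) (fun a _ => ((a.1, a.2 + 1) : ℤ×ℤ))
  · intro a ha; simp only [mem_filter] at *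
    refine ⟨ha.2, ?_⟩; simpa using ha.1
  · intro a ha; simp only [mem_filter] at *
    refine ⟨ha.2, ?_⟩; simpa using ha.1
  · intro a _; simp
  · intro a _; simp

lemma bondPairs2_eq (F : Finset (ℤ × ℤ)) : bondPairs2 F = 2 * (Hcnt F + Vcnt F) := by
  classical
  set T : Finset ((ℤ×ℤ)×(ℤ×ℤ)) :=
    (pairsOf F (fun x => (x.1+1, x.2)) ∪ pairsOf F (fun x => (x.1-1, x.2))) ∪
    (pairsOf F (fun x => (x.1, x.2+1)) ∪ pairsOf F (fun x => (x.1, x.2-1))) with hT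
  have hset : {p : (ℤ×ℤ)×(ℤ×ℤ) | adj2 p.1 p.2 ∧ p.1 ∈ F ∧ p.2 ∈ F} = ↑T := by
    ext p
    simp only [Set.mem_setOf_eq, adj2_iff, hT, coe_union, Set.mem_union, mem_coe, mem_pairsOf]
    constructor
    · rintro ⟨(h|h|h|h), h1, h2⟩
      · exact Or.inl (Or.inl ⟨h1, h2, h⟩)
      · exact Or.inl (Or.inr ⟨h1, h2, h⟩)
      · exact Or.inr (Or.inl ⟨h1, h2, h⟩)
      · exact Or.inr (Or.inr ⟨h1, h2, h⟩)
    · rintro ((⟨h1,h2,h⟩|⟨h1,h2,h⟩)|(⟨h1,h2,h⟩|⟨h1,h2,h⟩)) <;>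
        exact ⟨by tauto, h1, h2⟩
  rw [bondPairs2, hset, Set.ncard_coe_finset]
  have d12 : Disjoint (pairsOf F (fun x => (x.1+1, x.2))) (pairsOf F (fun x => (x.1-1, x.2))) := by
    rw [Finset.disjoint_left]; intro p h1 h2
    rw [mem_pairsOf] at h1 h2
    have := h1.2.2; have := h2.2.2
    have : (p.1.1 + 1 : ℤ) = p.1.1 - 1 := by
      have e1 := h1.2.2; have e2 := h2.2.2
      rw [e1] at e2; exact (Prod.mk.injEq _ _ _ _ ▸ e2).1
    omega
  have d34 : Disjoint (pairsOf F (fun x => (x.1, x.2+1))) (pairsOf F (fun x => (x.1, x.2-1))) := by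
    rw [Finset.disjoint_left]; intro p h1 h2
    rw [mem_pairsOf] at h1 h2
    have : (p.1.2 + 1 : ℤ) = p.1.2 - 1 := by
      have e1 := h1.2.2; have e2 := h2.2.2
      rw [e1] at e2; exact (Prod.mk.injEq _ _ _ _ ▸ e2).2
    omega
  have dHV : Disjoint
      (pairsOf F (fun x => (x.1+1, x.2)) ∪ pairsOf F (fun x => (x.1-1, x.2)))
      (pairsOf F (fun x => (x.1, x.2+1)) ∪ pairsOf F (fun x => (x.1, x.2-1))) := by
    rw [Finset.disjoint_left]; intro p h1 h2
    rw [mem_union, mem_pairsOf, mem_pairsOf] at h1 h2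
    rcases h1 with ⟨_,_,e1⟩|⟨_,_,e1⟩ <;> rcases h2 with ⟨_,_,e2⟩|⟨_,_,e2⟩ <;>
      · rw [e1] at e2
        have h1' := (Prod.mk.injEq _ _ _ _ ▸ e2).1
        have h2' := (Prod.mk.injEq _ _ _ _ ▸ e2).2
        omega
  rw [hT, Finset.card_union_of_disjoint dHV, Finset.card_union_of_disjoint d12,
      Finset.card_union_of_disjoint d34, card_pairsOf, card_pairsOf, card_pairsOf, card_pairsOf]
  have hH : (F.filter (fun x => ((x.1-1, x.2) : ℤ×ℤ) ∈ F)).card = Hcnt F :=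
    card_filter_H F
  have hV : (F.filter (fun x => ((x.1, x.2-1) : ℤ×ℤ) ∈ F)).card = Vcnt F :=
    card_filter_V F
  rw [hH, hV]; unfold Hcnt Vcnt; ring

def nbrs (x : ℤ×ℤ) : Finset (ℤ×ℤ) := {(x.1+1, x.2), (x.1-1, x.2), (x.1, x.2+1), (x.1, x.2-1)}

lemma card_nbrs (x : ℤ×ℤ) : (nbrs x).card = 4 := by
  rw [nbrs]
  rw [card_insert_of_notMem, card_insert_of_notMem, card_insert_of_notMem, card_singleton] <;>
    simp [Prod.ext_iff] <;> omega

lemma theta2_add_bondPairs2 (E : Finset (ℤ × ℤ)) :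
    theta2 E + bondPairs2 E = 4 * E.card := by
  classical
  set U : Finset ((ℤ×ℤ)×(ℤ×ℤ)) := E.biUnion (fun x => (nbrs x).image (fun y => (x, y))) with hU
  have hmemU : ∀ p : (ℤ×ℤ)×(ℤ×ℤ), p ∈ U ↔ p.1 ∈ E ∧ adj2 p.1 p.2 := by
    intro p
    simp only [hU, mem_biUnion, mem_image]
    constructor
    · rintro ⟨x, hx, y, hy, rfl⟩
      refine ⟨hx, ?_⟩
      simp only [nbrs, mem_insert, mem_singleton] at hy
      rw [adj2_iff]; tauto
    · rintro ⟨hx, hadj⟩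
      refine ⟨p.1, hx, p.2, ?_, rfl⟩
      rw [adj2_iff] at hadj
      simp only [nbrs, mem_insert, mem_singleton]; tauto
  have hcardU : U.card = 4 * E.card := by
    rw [hU, Finset.card_biUnion]
    · rw [Finset.sum_congr rfl (fun x _ => ?_), Finset.sum_const, smul_eq_mul, mul_comm]
      rw [Finset.card_image_of_injective _ (fun a b h => (Prod.mk.injEq _ _ _ _ ▸ h).2),
        card_nbrs]
    · intro a _ b _ hab
      rw [Function.onFun_apply, Finset.disjoint_left]
      rintro p hp1 hp2
      simp only [mem_image] at hp1 hp2
      obtain ⟨y, _, rfl⟩ := hp1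
      obtain ⟨z, _, h⟩ := hp2
      exact hab ((Prod.mk.injEq _ _ _ _ ▸ h).1.symm)
  have hsplit : {p : (ℤ×ℤ)×(ℤ×ℤ) | adj2 p.1 p.2 ∧ p.1 ∈ E ∧ p.2 ∉ E} ∪
      {p : (ℤ×ℤ)×(ℤ×ℤ) | adj2 p.1 p.2 ∧ p.1 ∈ E ∧ p.2 ∈ E} = ↑U := by
    ext p
    simp only [Set.mem_union, Set.mem_setOf_eq, mem_coe, hmemU]
    tauto
  have hdisj : Disjoint {p : (ℤ×ℤ)×(ℤ×ℤ) | adj2 p.1 p.2 ∧ p.1 ∈ E ∧ p.2 ∉ E}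
      {p : (ℤ×ℤ)×(ℤ×ℤ) | adj2 p.1 p.2 ∧ p.1 ∈ E ∧ p.2 ∈ E} := by
    rw [Set.disjoint_left]; rintro p ⟨_, _, h⟩ ⟨_, _, h'⟩; exact h h'
  have hf1 : {p : (ℤ×ℤ)×(ℤ×ℤ) | adj2 p.1 p.2 ∧ p.1 ∈ E ∧ p.2 ∉ E}.Finite := by
    apply Set.Finite.subset (U.finite_toSet)
    intro p hp; rw [mem_coe, hmemU]; exact ⟨hp.2.1, hp.1⟩
  have hf2 : {p : (ℤ×ℤ)×(ℤ×ℤ) | adj2 p.1 p.2 ∧ p.1 ∈ E ∧ p.2 ∈ E}.Finite := by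
    apply Set.Finite.subset (U.finite_toSet)
    intro p hp; rw [mem_coe, hmemU]; exact ⟨hp.2.1, hp.1⟩
  have := Set.ncard_union_eq hdisj hf1 hf2
  rw [hsplit, Set.ncard_coe_finset, hcardU] at this
  rw [theta2, bondPairs2, ← this]

lemma rows_add_Hcnt_le (F : Finset (ℤ × ℤ)) :
    (F.image Prod.snd).card + Hcnt F ≤ F.card := by
  classical
  have key : (F.image Prod.snd).card ≤ (F.filter (fun x => ((x.1+1, x.2) : ℤ×ℤ) ∉ F)).card := by
    apply Finset.card_le_card_of_injOn
      (f := fun y => if h : (F.filter (fun x => x.2 = y)).Nonempty then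
        Classical.choose (Finset.exists_max_image _ Prod.fst h) else (0, 0))
    · intro y hy
      have hne : (F.filter (fun x => x.2 = y)).Nonempty := by
        rw [Finset.mem_coe, Finset.mem_image] at hy
        obtain ⟨x, hx, rfl⟩ := hy
        exact ⟨x, by simp [hx]⟩
      simp only [dif_pos hne]
      obtain ⟨hmem, hmax⟩ := Classical.choose_spec (Finset.exists_max_image _ Prod.fst hne)
      set m := Classical.choose (Finset.exists_max_image _ Prod.fst hne)
      rw [mem_filter] at hmem
      rw [Finset.mem_coe, mem_filter]
      refine ⟨hmem.1, fun hc => ?_⟩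
      have := hmax (m.1 + 1, m.2) (by rw [mem_filter]; exact ⟨hc, hmem.2⟩)
      simp at this
    · intro y1 hy1 y2 hy2 heq
      rw [Finset.mem_coe, Finset.mem_image] at hy1 hy2
      have hne1 : (F.filter (fun x => x.2 = y1)).Nonempty := by
        obtain ⟨x, hx, rfl⟩ := hy1; exact ⟨x, by simp [hx]⟩
      have hne2 : (F.filter (fun x => x.2 = y2)).Nonempty := by
        obtain ⟨x, hx, rfl⟩ := hy2; exact ⟨x, by simp [hx]⟩
      simp only [dif_pos hne1, dif_pos hne2] at heq
      have h1 := (mem_filter.mp (Classical.choose_spec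
        (Finset.exists_max_image _ Prod.fst hne1)).1).2
      have h2 := (mem_filter.mp (Classical.choose_spec
        (Finset.exists_max_image _ Prod.fst hne2)).1).2
      rw [← h1, ← h2, heq]
  have h2 := Finset.card_filter_add_card_filter_not
    (s := F) (p := fun x => ((x.1+1, x.2) : ℤ×ℤ) ∈ F)
  beta_reduce at h2
  unfold Hcnt
  omega

lemma cols_add_Vcnt_le (F : Finset (ℤ × ℤ)) :
    (F.image Prod.fst).card + Vcnt F ≤ F.card := by
  classical
  have key : (F.image Prod.fst).card ≤ (F.filter (fun x => ((x.1, x.2+1) : ℤ×ℤ) ∉ F)).card := by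
    apply Finset.card_le_card_of_injOn
      (f := fun y => if h : (F.filter (fun x => x.1 = y)).Nonempty then
        Classical.choose (Finset.exists_max_image _ Prod.snd h) else (0, 0))
    · intro y hy
      have hne : (F.filter (fun x => x.1 = y)).Nonempty := by
        rw [Finset.mem_coe, Finset.mem_image] at hy
        obtain ⟨x, hx, rfl⟩ := hy
        exact ⟨x, by simp [hx]⟩
      simp only [dif_pos hne]
      obtain ⟨hmem, hmax⟩ := Classical.choose_spec (Finset.exists_max_image _ Prod.snd hne)
      set m := Classical.choose (Finset.exists_max_image _ Prod.snd hne)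
      rw [mem_filter] at hmem
      rw [Finset.mem_coe, mem_filter]
      refine ⟨hmem.1, fun hc => ?_⟩
      have := hmax (m.1, m.2 + 1) (by rw [mem_filter]; exact ⟨hc, hmem.2⟩)
      simp at this
    · intro y1 hy1 y2 hy2 heq
      rw [Finset.mem_coe, Finset.mem_image] at hy1 hy2
      have hne1 : (F.filter (fun x => x.1 = y1)).Nonempty := by
        obtain ⟨x, hx, rfl⟩ := hy1; exact ⟨x, by simp [hx]⟩
      have hne2 : (F.filter (fun x => x.1 = y2)).Nonempty := by
        obtain ⟨x, hx, rfl⟩ := hy2; exact ⟨x, by simp [hx]⟩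
      simp only [dif_pos hne1, dif_pos hne2] at heq
      have h1 := (mem_filter.mp (Classical.choose_spec
        (Finset.exists_max_image _ Prod.snd hne1)).1).2
      have h2 := (mem_filter.mp (Classical.choose_spec
        (Finset.exists_max_image _ Prod.snd hne2)).1).2
      rw [← h1, ← h2, heq]
  have h2 := Finset.card_filter_add_card_filter_not
    (s := F) (p := fun x => ((x.1, x.2+1) : ℤ×ℤ) ∈ F)
  beta_reduce at h2
  unfold Vcnt
  omega

lemma card_le_cols_mul_rows (F : Finset (ℤ × ℤ)) :
    F.card ≤ (F.image Prod.fst).card * (F.image Prod.snd).card := by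
  calc F.card ≤ ((F.image Prod.fst) ×ˢ (F.image Prod.snd)).card := by
        apply Finset.card_le_card
        intro x hx
        rw [Finset.mem_product]
        exact ⟨Finset.mem_image_of_mem _ hx, Finset.mem_image_of_mem _ hx⟩
    _ = _ := Finset.card_product _ _

lemma sum_bound (r c s s' e d : ℕ) (hs : 1 ≤ s) (hs' : s' = s ∨ s' = s + 1)
    (he : e < s') (hd : s * s' + e = d) (hrc : d ≤ r * c) :
    s + s' + (if e = 0 then 0 else 1) ≤ r + c := by
  by_contra hcon
  push_neg at hcon
  have h4 : 4 * (r * c) ≤ (r + c) ^ 2 := by nlinarith [sq_nonneg ((r:ℤ) - c)]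
  rcases Nat.eq_zero_or_pos e with rfl | hepos
  · rw [if_pos rfl] at hcon
    rcases hs' with rfl | rfl <;> nlinarith
  · rw [if_neg (by omega)] at hcon
    rcases hs' with rfl | rfl <;> nlinarith

noncomputable def daisy (s s' e : ℕ) : Finset (ℤ×ℤ) :=
  (Icc (1 : ℤ) (s : ℤ) ×ˢ Icc (1 : ℤ) (s' : ℤ)) ∪
    (if s' = s then Icc (1 : ℤ) (e : ℤ) ×ˢ {(s' : ℤ) + 1}
     else {(s : ℤ) + 1} ×ˢ Icc (1 : ℤ) (e : ℤ))

lemma mem_daisy_eq (s e : ℕ) (x : ℤ×ℤ) :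
    x ∈ daisy s s e ↔ (1 ≤ x.1 ∧ x.1 ≤ s ∧ 1 ≤ x.2 ∧ x.2 ≤ s) ∨
      (1 ≤ x.1 ∧ x.1 ≤ e ∧ x.2 = (s:ℤ)+1) := by
  rw [daisy, if_pos rfl, Finset.mem_union, Finset.mem_product, Finset.mem_product,
    Finset.mem_Icc, Finset.mem_Icc, Finset.mem_Icc, Finset.mem_singleton]
  tauto

lemma mem_daisy_ne (s e : ℕ) (x : ℤ×ℤ) :
    x ∈ daisy s (s+1) e ↔ (1 ≤ x.1 ∧ x.1 ≤ s ∧ 1 ≤ x.2 ∧ x.2 ≤ (s:ℤ)+1) ∨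
      (x.1 = (s:ℤ)+1 ∧ 1 ≤ x.2 ∧ x.2 ≤ e) := by
  rw [daisy, if_neg (by omega), Finset.mem_union, Finset.mem_product, Finset.mem_product,
    Finset.mem_Icc, Finset.mem_Icc, Finset.mem_Icc, Finset.mem_singleton]
  push_cast
  tauto

lemma card_Icc_int (n : ℕ) : (Icc (1 : ℤ) (n : ℤ)).card = n := by
  rw [Int.card_Icc]; omega

lemma card_Icc_int' (n : ℕ) : (Icc (1 : ℤ) ((n : ℤ) - 1)).card = n - 1 := by
  rw [Int.card_Icc]; omega

lemma card_daisy (s s' e : ℕ) (hss' : s' = s ∨ s' = s + 1) :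
    (daisy s s' e).card = s * s' + e := by
  have hd : Disjoint (Icc (1 : ℤ) (s : ℤ) ×ˢ Icc (1 : ℤ) (s' : ℤ))
      (if s' = s then Icc (1 : ℤ) (e : ℤ) ×ˢ {(s' : ℤ) + 1}
       else {(s : ℤ) + 1} ×ˢ Icc (1 : ℤ) (e : ℤ)) := by
    rw [Finset.disjoint_left]
    intro x hx hx'
    rw [Finset.mem_product, Finset.mem_Icc, Finset.mem_Icc] at hx
    split_ifs at hx' with h
    · rw [Finset.mem_product, Finset.mem_singleton] at hx'; omega
    · rw [Finset.mem_product, Finset.mem_singleton] at hx'; omega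
  rw [daisy, Finset.card_union_of_disjoint hd, Finset.card_product, card_Icc_int, card_Icc_int]
  congr 1
  rcases hss' with h | h
  · rw [if_pos h, Finset.card_product, card_Icc_int, Finset.card_singleton, mul_one]
  · rw [if_neg (by omega), Finset.card_product, card_Icc_int, Finset.card_singleton, one_mul]

lemma Hcnt_eq_lb (s e : ℕ) (hs : 1 ≤ s) (he : e < s) :
    (s - 1) * s + (e - 1) ≤ Hcnt (daisy s s e) := by
  have hsubset : (Icc (1:ℤ) ((s:ℤ)-1) ×ˢ Icc (1:ℤ) (s:ℤ)) ∪
      (Icc (1:ℤ) ((e:ℤ)-1) ×ˢ {(s:ℤ)+1}) ⊆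
      (daisy s s e).filter (fun x => ((x.1+1, x.2) : ℤ×ℤ) ∈ daisy s s e) := by
    intro x hx
    rw [Finset.mem_union, Finset.mem_product, Finset.mem_product, Finset.mem_Icc,
      Finset.mem_Icc, Finset.mem_Icc, Finset.mem_singleton] at hx
    rw [Finset.mem_filter, mem_daisy_eq, mem_daisy_eq]
    simp only
    omega
  have hdj : Disjoint (Icc (1:ℤ) ((s:ℤ)-1) ×ˢ Icc (1:ℤ) (s:ℤ))
      (Icc (1:ℤ) ((e:ℤ)-1) ×ˢ {(s:ℤ)+1}) := by
    rw [Finset.disjoint_left]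
    intro x hx hx'
    rw [Finset.mem_product, Finset.mem_Icc, Finset.mem_Icc] at hx
    rw [Finset.mem_product, Finset.mem_singleton] at hx'
    omega
  have := Finset.card_le_card hsubset
  rw [Finset.card_union_of_disjoint hdj, Finset.card_product, Finset.card_product,
    card_Icc_int, card_Icc_int', card_Icc_int', Finset.card_singleton, mul_one] at this
  exact this

lemma Vcnt_eq_lb (s e : ℕ) (hs : 1 ≤ s) (he : e < s) :
    s * (s - 1) + e ≤ Vcnt (daisy s s e) := by
  have hsubset : (Icc (1:ℤ) (s:ℤ) ×ˢ Icc (1:ℤ) ((s:ℤ)-1)) ∪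
      (Icc (1:ℤ) (e:ℤ) ×ˢ {(s:ℤ)}) ⊆
      (daisy s s e).filter (fun x => ((x.1, x.2+1) : ℤ×ℤ) ∈ daisy s s e) := by
    intro x hx
    rw [Finset.mem_union, Finset.mem_product, Finset.mem_product, Finset.mem_Icc,
      Finset.mem_Icc, Finset.mem_Icc, Finset.mem_singleton] at hx
    rw [Finset.mem_filter, mem_daisy_eq, mem_daisy_eq]
    simp only
    omega
  have hdj : Disjoint (Icc (1:ℤ) (s:ℤ) ×ˢ Icc (1:ℤ) ((s:ℤ)-1))
      (Icc (1:ℤ) (e:ℤ) ×ˢ {(s:ℤ)}) := by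
    rw [Finset.disjoint_left]
    intro x hx hx'
    rw [Finset.mem_product, Finset.mem_Icc, Finset.mem_Icc] at hx
    rw [Finset.mem_product, Finset.mem_singleton] at hx'
    omega
  have := Finset.card_le_card hsubset
  rw [Finset.card_union_of_disjoint hdj, Finset.card_product, Finset.card_product,
    card_Icc_int, card_Icc_int, card_Icc_int', Finset.card_singleton, mul_one] at this
  exact this

lemma Hcnt_ne_lb (s e : ℕ) (hs : 1 ≤ s) (he : e < s + 1) :
    (s - 1) * (s + 1) + e ≤ Hcnt (daisy s (s+1) e) := by
  have hsubset : (Icc (1:ℤ) ((s:ℤ)-1) ×ˢ Icc (1:ℤ) ((s:ℤ)+1)) ∪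
      ({(s:ℤ)} ×ˢ Icc (1:ℤ) (e:ℤ)) ⊆
      (daisy s (s+1) e).filter (fun x => ((x.1+1, x.2) : ℤ×ℤ) ∈ daisy s (s+1) e) := by
    intro x hx
    rw [Finset.mem_union, Finset.mem_product, Finset.mem_product, Finset.mem_Icc,
      Finset.mem_Icc, Finset.mem_Icc, Finset.mem_singleton] at hx
    rw [Finset.mem_filter, mem_daisy_ne, mem_daisy_ne]
    simp only
    omega
  have hdj : Disjoint (Icc (1:ℤ) ((s:ℤ)-1) ×ˢ Icc (1:ℤ) ((s:ℤ)+1))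
      ({(s:ℤ)} ×ˢ Icc (1:ℤ) (e:ℤ)) := by
    rw [Finset.disjoint_left]
    intro x hx hx'
    rw [Finset.mem_product, Finset.mem_Icc, Finset.mem_Icc] at hx
    rw [Finset.mem_product, Finset.mem_singleton] at hx'
    omega
  have := Finset.card_le_card hsubset
  have c1 : (Icc (1:ℤ) ((s:ℤ)+1)).card = s + 1 := by rw [Int.card_Icc]; omega
  rw [Finset.card_union_of_disjoint hdj, Finset.card_product, Finset.card_product,
    c1, card_Icc_int, card_Icc_int', Finset.card_singleton, one_mul] at this
  exact this

lemma Vcnt_ne_lb (s e : ℕ) (hs : 1 ≤ s) (he : e < s + 1) :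
    s * s + (e - 1) ≤ Vcnt (daisy s (s+1) e) := by
  have hsubset : (Icc (1:ℤ) (s:ℤ) ×ˢ Icc (1:ℤ) (s:ℤ)) ∪
      ({(s:ℤ)+1} ×ˢ Icc (1:ℤ) ((e:ℤ)-1)) ⊆
      (daisy s (s+1) e).filter (fun x => ((x.1, x.2+1) : ℤ×ℤ) ∈ daisy s (s+1) e) := by
    intro x hx
    rw [Finset.mem_union, Finset.mem_product, Finset.mem_product, Finset.mem_Icc,
      Finset.mem_Icc, Finset.mem_Icc, Finset.mem_singleton] at hx
    rw [Finset.mem_filter, mem_daisy_ne, mem_daisy_ne]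
    simp only
    omega
  have hdj : Disjoint (Icc (1:ℤ) (s:ℤ) ×ˢ Icc (1:ℤ) (s:ℤ))
      ({(s:ℤ)+1} ×ˢ Icc (1:ℤ) ((e:ℤ)-1)) := by
    rw [Finset.disjoint_left]
    intro x hx hx'
    rw [Finset.mem_product, Finset.mem_Icc, Finset.mem_Icc] at hx
    rw [Finset.mem_product, Finset.mem_singleton] at hx'
    omega
  have := Finset.card_le_card hsubset
  rw [Finset.card_union_of_disjoint hdj, Finset.card_product, Finset.card_product,
    card_Icc_int, card_Icc_int', Finset.card_singleton, one_mul] at this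
  exact this

lemma daisy_bond_lb (s s' e : ℕ) (hs : 1 ≤ s) (hss' : s' = s ∨ s' = s + 1) (he : e < s') :
    2 * (s * s' + e) ≤ Hcnt (daisy s s' e) + Vcnt (daisy s s' e)
      + s + s' + (if e = 0 then 0 else 1) := by
  rcases hss' with h | h
  · rw [h] at he ⊢
    have h1 := Hcnt_eq_lb s e hs he
    have h2 := Vcnt_eq_lb s e hs he
    have e1 : (s - 1) * s + s = s * s := by cases s with | zero => omega | succ n => simp [Nat.succ_sub_one, Nat.succ_mul]
    have e2 : s * (s - 1) + s = s * s := by cases s with | zero => omega | succ n => simp [Nat.succ_sub_one, Nat.mul_succ]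
    rcases Nat.eq_zero_or_pos e with rfl | hp
    · rw [if_pos rfl]; omega
    · rw [if_neg (by omega)]; omega
  · rw [h] at he ⊢
    have h1 := Hcnt_ne_lb s e hs he
    have h2 := Vcnt_ne_lb s e hs he
    have e1 : (s - 1) * (s + 1) + (s + 1) = s * (s + 1) := by
      cases s with | zero => omega | succ n => simp [Nat.succ_sub_one, Nat.succ_mul]
    have e2 : s * s + s = s * (s + 1) := by ring
    rcases Nat.eq_zero_or_pos e with rfl | hp
    · rw [if_pos rfl]; omega
    · rw [if_neg (by omega)]; omega

lemma main_aux (d s s' e : ℕ) (hs : 1 ≤ s) (hss' : s' = s ∨ s' = s + 1)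
    (he : e < s') (hd : s * s' + e = d) :
    (daisy s s' e).card = d ∧
      ∀ F : Finset (ℤ × ℤ), F.card = d → theta2 (daisy s s' e) ≤ theta2 F := by
  have hcard : (daisy s s' e).card = d := by rw [card_daisy s s' e hss']; exact hd
  refine ⟨hcard, fun F hF => ?_⟩
  obtain ⟨k, hk⟩ : ∃ k, (if e = 0 then 0 else 1) = k := ⟨_, rfl⟩
  -- upper bound for F
  have hub : Hcnt F + Vcnt F + s + s' + k ≤ 2 * d := by
    have h1 := rows_add_Hcnt_le F
    have h2 := cols_add_Vcnt_le F
    have h3 := card_le_cols_mul_rows F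
    rw [hF] at h1 h2 h3
    have h4 := sum_bound (F.image Prod.fst).card (F.image Prod.snd).card s s' e d hs hss' he hd h3
    rw [hk] at h4
    omega
  -- lower bound for daisy
  have hlb : 2 * d ≤ Hcnt (daisy s s' e) + Vcnt (daisy s s' e) + s + s' + k := by
    have := daisy_bond_lb s s' e hs hss' he
    rw [hd, hk] at this
    exact this
  have hbF := bondPairs2_eq F
  have hbD := bondPairs2_eq (daisy s s' e)
  have htF := theta2_add_bondPairs2 F
  have htD := theta2_add_bondPairs2 (daisy s s' e)
  rw [hF] at htF
  rw [hcard] at htD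
  omega

/-- for every `d ≥ 1` there is a daisy `D_d = R(s,s') ∪ L_e`
which minimizes the edge perimeter among `d`-element subsets of `ℤ²`. -/
theorem exists_daisy_minimizer (d : ℕ) (hd : 1 ≤ d) :
    ∃ s s' e : ℕ, 1 ≤ s ∧ (s' = s ∨ s' = s + 1) ∧ s * s' + e = d ∧ e < s' ∧
      (let D : Finset (ℤ × ℤ) :=
        (Icc (1 : ℤ) (s : ℤ) ×ˢ Icc (1 : ℤ) (s' : ℤ)) ∪
          (if s' = s then Icc (1 : ℤ) (e : ℤ) ×ˢ {(s' : ℤ) + 1}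
           else {(s : ℤ) + 1} ×ˢ Icc (1 : ℤ) (e : ℤ))
      D.card = d ∧ ∀ F : Finset (ℤ × ℤ), F.card = d → theta2 D ≤ theta2 F) := by
  set s := Nat.sqrt d with hsdef
  have hs : 1 ≤ s := Nat.sqrt_pos.mpr (by omega)
  have hle : s * s ≤ d := by have h := Nat.sqrt_le' d; rw [pow_two] at h; exact h
  have hlt : d < (s + 1) * (s + 1) := by
    have h := Nat.lt_succ_sqrt' d; rw [pow_two] at h; exact h
  obtain ⟨a, ha⟩ : ∃ a, s * s = a := ⟨_, rfl⟩
  obtain ⟨b, hb⟩ : ∃ b, s * (s + 1) = b := ⟨_, rfl⟩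
  have hab : b = a + s := by rw [← ha, ← hb]; ring
  have hsq : (s + 1) * (s + 1) = a + 2 * s + 1 := by rw [← ha]; ring
  rw [ha] at hle
  rw [hsq] at hlt
  by_cases hcase : d < b
  · refine ⟨s, s, d - a, hs, Or.inl rfl, by rw [ha]; omega, by omega, ?_⟩
    exact main_aux d s s (d - a) hs (Or.inl rfl) (by omega) (by rw [ha]; omega)
  · refine ⟨s, s + 1, d - b, hs, Or.inr rfl, by rw [hb]; omega, by omega, ?_⟩
    exact main_aux d s (s + 1) (d - b) hs (Or.inr rfl) (by omega) (by rw [hb]; omega)
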